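/- Let 𝒴 be a nonempty finite alphabet, P a probability distribution on 𝒴, n a positive integer, and Y_1, …, Y_n i.i.d. random variables with law P. Let P̂ⁿ be the empirical distribution, P̂ⁿ(y) := |{i ∈ [n] : Y_i = y}|/n. Then E[d_TV(P̂ⁿ, P)] ≤ √((|𝒴|−1)/n). -/

import Mathlib

open MeasureTheory ProbabilityTheory

/-- A probability distribution on a finite alphabet. -/
def IsDist {𝒴 : Type*} [Fintype 𝒴] (P : 𝒴 → ℝ) : Prop :=
  (∀ y, 0 ≤ P y) ∧ ∑ y, P y = 1

/-- Total variation distance (unnormalized ℓ₁ distance, valued in [0,2]). -/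
noncomputable def dTV {𝒴 : Type*} [Fintype 𝒴] (P Q : 𝒴 → ℝ) : ℝ :=
  ∑ y, |P y - Q y|

/-- Empirical distribution of `n` samples `Y 0, …, Y (n-1)`. -/
noncomputable def empDist {𝒴 : Type*} [Fintype 𝒴] [DecidableEq 𝒴] {n : ℕ}
    (Ys : Fin n → 𝒴) : 𝒴 → ℝ :=
  fun y => ((Finset.univ.filter fun i => Ys i = y).card : ℝ) / n

/-- if `Y₁, …, Yₙ` are i.i.d. with law `P` on a finite alphabet 𝒴
and `P̂ⁿ` is the empirical distribution, then
`E[d_TV(P̂ⁿ, P)] ≤ √((|𝒴|−1)/n)`. -/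
theorem sum_sqrt_le {ι : Type*} (s : Finset ι) (f : ι → ℝ) (hf : ∀ i ∈ s, 0 ≤ f i) :
    ∑ i ∈ s, Real.sqrt (f i) ≤ Real.sqrt (s.card * ∑ i ∈ s, f i) := by
  refine Real.le_sqrt_of_sq_le ?_
  calc (∑ i ∈ s, Real.sqrt (f i)) ^ 2 ≤ s.card * ∑ i ∈ s, Real.sqrt (f i) ^ 2 :=
        sq_sum_le_card_mul_sum_sq
    _ = s.card * ∑ i ∈ s, f i := by
        congr 1; exact Finset.sum_congr rfl fun i hi => Real.sq_sqrt (hf i hi)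

theorem stmt_7 {𝒴 : Type*} [Fintype 𝒴] [Nonempty 𝒴] [DecidableEq 𝒴]
    [MeasurableSpace 𝒴] [MeasurableSingletonClass 𝒴]
    {Ω : Type*} [MeasurableSpace Ω] (μ : Measure Ω) [IsProbabilityMeasure μ]
    (P : 𝒴 → ℝ) (hP : IsDist P) (n : ℕ) (hn : 0 < n)
    (Y : Fin n → Ω → 𝒴) (hmeas : ∀ i, Measurable (Y i))
    (hindep : iIndepFun (m := fun _ : Fin n => ‹MeasurableSpace 𝒴›) Y μ)
    (hlaw : ∀ i y, μ (Y i ⁻¹' {y}) = ENNReal.ofReal (P y)) :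
    ∫ ω, dTV (empDist fun i => Y i ω) P ∂μ ≤
      Real.sqrt ((Fintype.card 𝒴 - 1) / n) := by
  classical
  obtain ⟨hP0, hPsum⟩ := hP
  have hP1 : ∀ y, P y ≤ 1 := fun y => by
    calc P y ≤ ∑ z, P z := Finset.single_le_sum (fun z _ => hP0 z) (Finset.mem_univ y)
      _ = 1 := hPsum
  have hn' : (0:ℝ) < n := Nat.cast_pos.2 hn
  set k := Fintype.card 𝒴 with hk
  have hkpos : 0 < k := Fintype.card_pos
  -- indicator variables
  set X : 𝒴 → Fin n → Ω → ℝ := fun y i ω => if Y i ω = y then 1 else 0 with hXdef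
  have hXmeas : ∀ y i, Measurable (X y i) := by
    intro y i
    exact Measurable.ite (hmeas i (measurableSet_singleton y)) measurable_const measurable_const
  have hXmem : ∀ y i, MemLp (X y i) 2 μ := by
    intro y i
    refine memLp_of_bounded (a := 0) (b := 1) (ae_of_all _ fun ω => ?_)
      (hXmeas y i).aestronglyMeasurable 2
    by_cases h : Y i ω = y <;> simp [hXdef, h]
  have hXint : ∀ y i, Integrable (X y i) μ := fun y i => (hXmem y i).integrable one_le_two
  have hXind : ∀ y i, X y i = (Y i ⁻¹' {y}).indicator (fun _ => (1:ℝ)) := by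
    intro y i; funext ω
    simp [hXdef, Set.indicator_apply, Set.mem_preimage]
  have hXexp : ∀ y i, ∫ ω, X y i ω ∂μ = P y := by
    intro y i
    rw [show (fun ω => X y i ω) = (Y i ⁻¹' {y}).indicator (fun _ => (1:ℝ)) from hXind y i,
      integral_indicator_const (1:ℝ) (hmeas i (measurableSet_singleton y)), measureReal_def, hlaw i y,
      ENNReal.toReal_ofReal (hP0 y)]
    simp
  have hXsq : ∀ y i, (X y i) ^ 2 = X y i := by
    intro y i; funext ω
    by_cases h : Y i ω = y <;> simp [hXdef, h]
  have hXvar : ∀ y i, variance (X y i) μ = P y * (1 - P y) := by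
    intro y i
    rw [variance_eq_sub (hXmem y i), hXsq y i, hXexp y i]; ring
  -- sums
  set W : 𝒴 → Ω → ℝ := fun y ω => ∑ i, X y i ω with hWdef
  have hWsum : ∀ y, W y = ∑ i, X y i := by
    intro y; funext ω; simp [hWdef, Finset.sum_apply]
  have hWmem : ∀ y, MemLp (W y) 2 μ := by
    intro y; rw [hWsum y]; exact memLp_finsetSum' _ fun i _ => hXmem y i
  have hWexp : ∀ y, ∫ ω, W y ω ∂μ = n * P y := by
    intro y
    rw [show (fun ω => W y ω) = fun ω => ∑ i, X y i ω from rfl,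
      integral_finset_sum _ fun i _ => hXint y i]
    simp [hXexp]
  have hpair : ∀ y, Set.Pairwise ↑(Finset.univ : Finset (Fin n))
      fun i j => IndepFun (X y i) (X y j) μ := by
    intro y i _ j _ hij
    have h := hindep.indepFun hij
    have hφ : Measurable (fun z : 𝒴 => if z = y then (1:ℝ) else 0) :=
      Measurable.ite (measurableSet_singleton y) measurable_const measurable_const
    exact h.comp hφ hφ
  have hWvar : ∀ y, variance (W y) μ = n * (P y * (1 - P y)) := by
    intro y
    rw [hWsum y, IndepFun.variance_sum (fun i _ => hXmem y i) (hpair y)]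
    simp [hXvar]
  have hemp : ∀ y ω, empDist (fun i => Y i ω) y = W y ω / n := by
    intro y ω
    simp only [empDist, hWdef, hXdef, Finset.card_filter]
    push_cast
    rfl
  -- second moment of centered empirical frequency
  have hWint : ∀ y, Integrable (W y) μ := fun y => (hWmem y).integrable one_le_two
  have hWsqint : ∀ y, Integrable (fun ω => W y ω ^ 2) μ := by
    intro y
    have := (hWmem y).integrable_sq
    simpa [Pi.pow_apply] using this
  have hWsqexp : ∀ y, ∫ ω, W y ω ^ 2 ∂μ = n * (P y * (1 - P y)) + (n * P y) ^ 2 := by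
    intro y
    have h := variance_eq_sub (hWmem y)
    have h2 : μ[W y ^ 2] = ∫ ω, W y ω ^ 2 ∂μ := by
      congr 1
    have h3 : μ[W y] = n * P y := hWexp y
    rw [hWvar y, h2, h3] at h
    linarith
  have hEZ2 : ∀ y, ∫ ω, (W y ω / n - P y) ^ 2 ∂μ = P y * (1 - P y) / n := by
    intro y
    have hne : (n:ℝ) ≠ 0 := ne_of_gt hn'
    calc ∫ ω, (W y ω / n - P y) ^ 2 ∂μ
        = ∫ ω, ((1/n^2) * W y ω ^ 2 - (2 * P y / n) * W y ω + P y ^ 2) ∂μ := by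
          congr 1; funext ω; field_simp; ring
      _ = (1/n^2) * ∫ ω, W y ω ^ 2 ∂μ - (2 * P y / n) * ∫ ω, W y ω ∂μ + P y ^ 2 := by
          have hA : Integrable (fun ω => 1/(n:ℝ)^2 * W y ω ^ 2 - 2 * P y / (n:ℝ) * W y ω) μ :=
            ((hWsqint y).const_mul _).sub ((hWint y).const_mul _)
          rw [integral_add hA (integrable_const _),
            integral_sub ((hWsqint y).const_mul _) ((hWint y).const_mul _),
            integral_const_mul, integral_const_mul, integral_const]
          simp
      _ = P y * (1 - P y) / n := by
          rw [hWsqexp y, hWexp y]; field_simp; ring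
  -- L1 bound per symbol
  have hZmem : ∀ y, MemLp (fun ω => W y ω / n - P y) 2 μ := by
    intro y
    have h1 : MemLp (fun ω => W y ω / n) 2 μ := by
      simpa [div_eq_inv_mul] using (hWmem y).const_mul ((n:ℝ)⁻¹)
    exact h1.sub (memLp_const (P y))
  have hZint : ∀ y, Integrable (fun ω => |W y ω / n - P y|) μ :=
    fun y => ((hZmem y).integrable one_le_two).abs
  have key : ∀ y, ∫ ω, |W y ω / n - P y| ∂μ ≤ Real.sqrt (P y * (1 - P y) / n) := by
    intro y
    refine Real.le_sqrt_of_sq_le ?_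
    have habs : MemLp (fun ω => |W y ω / n - P y|) 2 μ := by
      simpa [abs] using (hZmem y).norm
    have hv := variance_nonneg (fun ω => |W y ω / n - P y|) μ
    rw [variance_eq_sub habs] at hv
    have h2 : μ[(fun ω => |W y ω / n - P y|) ^ 2] = P y * (1 - P y) / n := by
      rw [← hEZ2 y]
      congr 1; funext ω; simp [sq_abs]
    rw [h2] at hv
    linarith
  -- assemble
  have hsplit : ∫ ω, dTV (empDist fun i => Y i ω) P ∂μ
      = ∑ y, ∫ ω, |W y ω / n - P y| ∂μ := by
    rw [show (fun ω => dTV (empDist fun i => Y i ω) P)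
        = fun ω => ∑ y, |W y ω / n - P y| from ?_]
    · exact integral_finset_sum _ fun y _ => hZint y
    · funext ω
      simp only [dTV]
      exact Finset.sum_congr rfl fun y _ => by rw [hemp y ω]
  rw [hsplit]
  calc ∑ y, ∫ ω, |W y ω / n - P y| ∂μ
      ≤ ∑ y, Real.sqrt (P y * (1 - P y) / n) := Finset.sum_le_sum fun y _ => key y
    _ ≤ Real.sqrt (k * ∑ y, P y * (1 - P y) / n) := by
        simpa [hk] using sum_sqrt_le Finset.univ (fun y => P y * (1 - P y) / n)
          (fun y _ => div_nonneg (mul_nonneg (hP0 y) (by linarith [hP1 y])) hn'.le)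
    _ ≤ Real.sqrt (((k:ℝ) - 1) / n) := by
        apply Real.sqrt_le_sqrt
        have hcs : (1:ℝ) ≤ k * ∑ y, P y ^ 2 := by
          have := sq_sum_le_card_mul_sum_sq (s := (Finset.univ : Finset 𝒴)) (f := P)
          rw [hPsum] at this
          simpa [hk] using this
        have hexpand : ∑ y, P y * (1 - P y) / n = (1 - ∑ y, P y ^ 2) / n := by
          rw [← Finset.sum_div]
          congr 1
          rw [Finset.sum_congr rfl fun y (_ : y ∈ Finset.univ) =>
            (by ring : P y * (1 - P y) = P y - P y ^ 2), Finset.sum_sub_distrib, hPsum]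
        rw [hexpand, ← mul_div_assoc, div_le_div_iff₀ hn' hn']
        nlinarith [hn'.le]
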